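/- Let n ≥ 4 and let W ⊆ V(H_n) contain exactly one vertex v_{i,w_i} from each column C_i. If the associated sign sequence σ^W = s_0…s_{n−1}, where s_i = w_{i+1} − w_i for 0 ≤ i ≤ n−2 and s_{n−1} = −w_0 − w_{n−1} (arithmetic in Z_3), is good, then the replicated graph H_n(W) is 4-colourable. -/

import Mathlib

/-- Replicating a set `W` of vertices of `G`: each `w ∈ W` gets a clone (the
corresponding element of `Sum.inr`) adjacent to `w` and to all its neighbours. -/
def SimpleGraph.replicateSet {V : Type} (G : SimpleGraph V) (W : Set V) :
    SimpleGraph (V ⊕ W) where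
  Adj x y :=
    match x, y with
    | Sum.inl a, Sum.inl b => G.Adj a b
    | Sum.inl a, Sum.inr b => G.Adj a (b : V) ∨ a = (b : V)
    | Sum.inr a, Sum.inl b => G.Adj (a : V) b ∨ (a : V) = b
    | Sum.inr a, Sum.inr b => G.Adj (a : V) (b : V)
  symm := by
    constructor
    rintro (a | a) (b | b) h <;> simp only at h ⊢ <;>
      first
        | exact G.adj_symm h
        | (rcases h with h | h
           · exact Or.inl (G.adj_symm h)
           · exact Or.inr h.symm)
  loopless := by
    constructor
    rintro (a | a) h <;> simp only at h <;> exact G.irrefl h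

/-- Gallai's graph `H n`: the Cartesian product of the path on `Fin n` with the
triangle on `ZMod 3`, together with the three twist edges joining `(0, j)` to
`(n-1, -j)`. -/
def Hgraph (n : ℕ) : SimpleGraph (Fin n × ZMod 3) :=
  SimpleGraph.fromRel (fun x y =>
    (x.1 = y.1 ∧ x.2 ≠ y.2) ∨
    ((x.1 : ℕ) + 1 = (y.1 : ℕ) ∧ x.2 = y.2) ∨
    ((x.1 : ℕ) = 0 ∧ (y.1 : ℕ) = n - 1 ∧ y.2 = -x.2))

/-- `G` is `k`-critical: `χ(G) = k` and deleting any vertex leaves a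
`(k-1)`-colourable graph. -/
def SimpleGraph.IsCrit {V : Type} (G : SimpleGraph V) (k : ℕ) : Prop :=
  G.chromaticNumber = k ∧
    ∀ v : V, (SimpleGraph.induce {u | u ≠ v} G).Colorable (k - 1)

/-- A pattern: a cyclically ordered partition of the four colours (here
`Fin 4`) into a pair and two singletons, recorded canonically as the pair
followed by the two singletons `{x}`, `{y}` in cyclic order. -/
structure Pattern where
  pair : Finset (Fin 4)
  x : Fin 4
  y : Fin 4
  pair_card : pair.card = 2
  x_not_mem : x ∉ pair
  y_not_mem : y ∉ pair
  x_ne_y : x ≠ y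
deriving DecidableEq

/-- `ρ` is `+`-compatible with `π`: either `ρ = π`, or `ρ` is obtained from `π`
by moving one of the paired colours to the preceding part (in cyclic order). -/
def PlusCompat (π ρ : Pattern) : Prop :=
  ρ = π ∨ ∃ u ∈ π.pair, ∃ v ∈ π.pair, u ≠ v ∧
    ρ.pair = {π.y, u} ∧ ρ.x = v ∧ ρ.y = π.x

/-- `π` and `ρ` are `0`-compatible: the pair of `ρ` consists of the two colours
unpaired in `π`, and vice versa (this relation is symmetric; these are the
undirected edges of the auxiliary graph `D`). -/
def ZeroCompat (π ρ : Pattern) : Prop :=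
  ρ.pair = {π.x, π.y} ∧ π.pair = {ρ.x, ρ.y}

/-- `IsStroll σ π τ`: there is a `σ`-stroll in the auxiliary graph `D` from the
pattern `π` to the pattern `τ`.  Signs are elements of `ZMod 3`, with `1`
standing for `+` and `2` for `−`. -/
inductive IsStroll : List (ZMod 3) → Pattern → Pattern → Prop
  | nil (π : Pattern) : IsStroll [] π π
  | zero {σ : List (ZMod 3)} {π ρ τ : Pattern} :
      ZeroCompat π ρ → IsStroll σ ρ τ → IsStroll (0 :: σ) π τ
  | plus {σ : List (ZMod 3)} {π ρ τ : Pattern} :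
      PlusCompat π ρ → IsStroll σ ρ τ → IsStroll (1 :: σ) π τ
  | minus {σ : List (ZMod 3)} {π ρ τ : Pattern} :
      PlusCompat ρ π → IsStroll σ ρ τ → IsStroll (2 :: σ) π τ

/-- The pattern `({1,2},{3},{4})`. -/
def basePattern : Pattern :=
  ⟨{0, 1}, 2, 3, by decide, by decide, by decide, by decide⟩

/-- The pattern `({1,2},{4},{3})`. -/
def goodEnd : Pattern :=
  ⟨{0, 1}, 3, 2, by decide, by decide, by decide, by decide⟩

/-- The pattern `({3,4},{1},{2})`. -/
def reversingEnd : Pattern :=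
  ⟨{2, 3}, 0, 1, by decide, by decide, by decide, by decide⟩

/-- A sign sequence is good if some stroll runs from `({1,2},{3},{4})` to
`({1,2},{4},{3})`. -/
def GoodSeq (σ : List (ZMod 3)) : Prop := IsStroll σ basePattern goodEnd

/-- A sign sequence is reversing if some stroll runs from `({1,2},{3},{4})` to
`({3,4},{1},{2})`. -/
def ReversingSeq (σ : List (ZMod 3)) : Prop := IsStroll σ basePattern reversingEnd


-- auxiliary
def slotS (π : Pattern) (t : ZMod 3) : Finset (Fin 4) :=
  if t = 0 then π.pair else if t = 1 then {π.x} else {π.y}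

lemma slotS_zero (π : Pattern) : slotS π 0 = π.pair := if_pos rfl
lemma slotS_one (π : Pattern) : slotS π 1 = {π.x} := by
  rw [slotS, if_neg (by decide), if_pos rfl]
lemma slotS_two (π : Pattern) : slotS π 2 = {π.y} := by
  rw [slotS, if_neg (by decide), if_neg (by decide)]

lemma pair_nonempty (π : Pattern) : π.pair.Nonempty :=
  Finset.card_pos.mp (by rw [π.pair_card]; norm_num)

noncomputable def apick (π : Pattern) : Fin 4 := π.pair.min' (pair_nonempty π)
noncomputable def bpick (π : Pattern) : Fin 4 := π.pair.max' (pair_nonempty π)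

lemma apick_mem (π : Pattern) : apick π ∈ π.pair := Finset.min'_mem _ _
lemma bpick_mem (π : Pattern) : bpick π ∈ π.pair := Finset.max'_mem _ _
lemma apick_ne_bpick (π : Pattern) : apick π ≠ bpick π :=
  ne_of_lt (Finset.min'_lt_max'_of_card _ (by rw [π.pair_card]; norm_num))

noncomputable def posC (π : Pattern) (t : ZMod 3) : Fin 4 :=
  if t = 0 then apick π else if t = 1 then π.x else π.y

lemma posC_zero (π : Pattern) : posC π 0 = apick π := if_pos rfl
lemma posC_one (π : Pattern) : posC π 1 = π.x := by
  rw [posC, if_neg (by decide), if_pos rfl]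
lemma posC_two (π : Pattern) : posC π 2 = π.y := by
  rw [posC, if_neg (by decide), if_neg (by decide)]

lemma zmod3_cases : ∀ t : ZMod 3, t = 0 ∨ t = 1 ∨ t = 2 := by decide

lemma posC_mem (π : Pattern) (t : ZMod 3) : posC π t ∈ slotS π t := by
  rcases zmod3_cases t with rfl | rfl | rfl
  · rw [posC_zero, slotS_zero]; exact apick_mem π
  · rw [posC_one, slotS_one]; exact Finset.mem_singleton_self _
  · rw [posC_two, slotS_two]; exact Finset.mem_singleton_self _

lemma posC_ne_bpick (π : Pattern) (t : ZMod 3) : posC π t ≠ bpick π := by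
  rcases zmod3_cases t with rfl | rfl | rfl
  · rw [posC_zero]; exact apick_ne_bpick π
  · rw [posC_one]; exact fun h => π.x_not_mem (h ▸ bpick_mem π)
  · rw [posC_two]; exact fun h => π.y_not_mem (h ▸ bpick_mem π)

lemma posC_inj (π : Pattern) {t t' : ZMod 3} (h : t ≠ t') : posC π t ≠ posC π t' := by
  have hax : apick π ≠ π.x := fun e => π.x_not_mem (e ▸ apick_mem π)
  have hay : apick π ≠ π.y := fun e => π.y_not_mem (e ▸ apick_mem π)
  rcases zmod3_cases t with rfl | rfl | rfl <;>
    rcases zmod3_cases t' with rfl | rfl | rfl <;>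
    simp only [posC_zero, posC_one, posC_two] <;>
    first
      | exact absurd rfl h
      | exact hax
      | exact hay
      | exact hax.symm ∘ Eq.symm ∘ id
      | exact π.x_ne_y
      | exact fun e => hax e.symm
      | exact fun e => hay e.symm
      | exact fun e => π.x_ne_y e.symm

def StepRel (s : ZMod 3) (π ρ : Pattern) : Prop :=
  (s = 0 ∧ ZeroCompat π ρ) ∨ (s = 1 ∧ PlusCompat π ρ) ∨ (s = 2 ∧ PlusCompat ρ π)

lemma zero_disj {π ρ : Pattern} (h : ZeroCompat π ρ) (t : ZMod 3) :
    Disjoint (slotS π t) (slotS ρ t) := by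
  obtain ⟨h1, h2⟩ := h
  have hx : ρ.x ∈ π.pair := by rw [h2]; simp
  have hy : ρ.y ∈ π.pair := by rw [h2]; simp
  rcases zmod3_cases t with rfl | rfl | rfl
  · rw [slotS_zero, slotS_zero, h1]
    rw [Finset.disjoint_insert_right, Finset.disjoint_singleton_right]
    exact ⟨π.x_not_mem, π.y_not_mem⟩
  · rw [slotS_one, slotS_one, Finset.disjoint_singleton_left, Finset.mem_singleton]
    exact fun e => π.x_not_mem (e ▸ hx)
  · rw [slotS_two, slotS_two, Finset.disjoint_singleton_left, Finset.mem_singleton]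
    exact fun e => π.y_not_mem (e ▸ hy)

lemma plus_disj {π ρ : Pattern} (h : PlusCompat π ρ) (t : ZMod 3) :
    Disjoint (slotS π t) (slotS ρ (t - 1)) := by
  rcases zmod3_cases t with rfl | rfl | rfl
  · rw [show (0 : ZMod 3) - 1 = 2 by decide, slotS_zero, slotS_two,
      Finset.disjoint_singleton_right]
    rcases h with h' | ⟨u, hu, v, hv, huv, hp, hx, hy⟩
    · rw [h']; exact π.y_not_mem
    · rw [hy]; exact π.x_not_mem
  · rw [show (1 : ZMod 3) - 1 = 0 by decide, slotS_one, slotS_zero,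
      Finset.disjoint_singleton_left]
    rcases h with h' | ⟨u, hu, v, hv, huv, hp, hx, hy⟩
    · rw [h']; exact π.x_not_mem
    · rw [hp]
      simp only [Finset.mem_insert, Finset.mem_singleton]
      rintro (e | e)
      · exact π.x_ne_y e
      · exact π.x_not_mem (e ▸ hu)
  · rw [show (2 : ZMod 3) - 1 = 1 by decide, slotS_two, slotS_one,
      Finset.disjoint_singleton_left, Finset.mem_singleton]
    rcases h with h' | ⟨u, hu, v, hv, huv, hp, hx, hy⟩
    · rw [h']; exact fun e => π.x_ne_y e.symm
    · rw [hx]; exact fun e => π.y_not_mem (e ▸ hv)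

lemma minus_disj {π ρ : Pattern} (h : PlusCompat ρ π) (t : ZMod 3) :
    Disjoint (slotS π t) (slotS ρ (t - 2)) := by
  rcases zmod3_cases t with rfl | rfl | rfl
  · rw [show (0 : ZMod 3) - 2 = 1 by decide, slotS_zero, slotS_one,
      Finset.disjoint_singleton_right]
    rcases h with h' | ⟨u, hu, v, hv, huv, hp, hx, hy⟩
    · rw [h']; exact ρ.x_not_mem
    · rw [hp]
      simp only [Finset.mem_insert, Finset.mem_singleton]
      rintro (e | e)
      · exact ρ.x_ne_y e
      · exact ρ.x_not_mem (e ▸ hu)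
  · rw [show (1 : ZMod 3) - 2 = 2 by decide, slotS_one, slotS_two,
      Finset.disjoint_singleton_left, Finset.mem_singleton]
    rcases h with h' | ⟨u, hu, v, hv, huv, hp, hx, hy⟩
    · rw [h']; exact ρ.x_ne_y
    · rw [hx]; exact fun e => ρ.y_not_mem (e ▸ hv)
  · rw [show (2 : ZMod 3) - 2 = 0 by decide, slotS_two, slotS_zero,
      Finset.disjoint_singleton_left]
    rcases h with h' | ⟨u, hu, v, hv, huv, hp, hx, hy⟩
    · rw [h']; exact ρ.y_not_mem
    · rw [hy]; exact ρ.x_not_mem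

lemma stepRel_disj {s : ZMod 3} {π ρ : Pattern} (h : StepRel s π ρ) (t : ZMod 3) :
    Disjoint (slotS π t) (slotS ρ (t - s)) := by
  rcases h with ⟨rfl, h⟩ | ⟨rfl, h⟩ | ⟨rfl, h⟩
  · rw [sub_zero]; exact zero_disj h t
  · exact plus_disj h t
  · exact minus_disj h t

lemma slot_goodEnd_neg : ∀ t : ZMod 3, slotS goodEnd (-t) = slotS basePattern t := by
  decide

lemma stroll_exists {σ : List (ZMod 3)} {π τ : Pattern} (h : IsStroll σ π τ) :
    ∃ P : ℕ → Pattern, P 0 = π ∧ (∀ k, σ.length ≤ k → P k = τ) ∧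
      ∀ i, ∀ hi : i < σ.length, StepRel (σ.get ⟨i, hi⟩) (P i) (P (i + 1)) := by
  induction h with
  | nil π => exact ⟨fun _ => π, rfl, fun k _ => rfl, fun i hi => absurd hi (by simp)⟩
  | @zero σ π ρ τ hc _ ih =>
      obtain ⟨P, h0, hend, hstep⟩ := ih
      refine ⟨fun k => Nat.casesOn k π P, rfl, fun k hk => ?_, fun i hi => ?_⟩
      · cases k with
        | zero => simp at hk
        | succ k => exact hend k (Nat.le_of_succ_le_succ hk)
      · cases i with
        | zero =>
            refine Or.inl ⟨rfl, ?_⟩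
            show ZeroCompat π (P 0)
            rw [h0]; exact hc
        | succ i => exact hstep i (Nat.lt_of_succ_lt_succ hi)
  | @plus σ π ρ τ hc _ ih =>
      obtain ⟨P, h0, hend, hstep⟩ := ih
      refine ⟨fun k => Nat.casesOn k π P, rfl, fun k hk => ?_, fun i hi => ?_⟩
      · cases k with
        | zero => simp at hk
        | succ k => exact hend k (Nat.le_of_succ_le_succ hk)
      · cases i with
        | zero =>
            refine Or.inr (Or.inl ⟨rfl, ?_⟩)
            show PlusCompat π (P 0)
            rw [h0]; exact hc
        | succ i => exact hstep i (Nat.lt_of_succ_lt_succ hi)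
  | @minus σ π ρ τ hc _ ih =>
      obtain ⟨P, h0, hend, hstep⟩ := ih
      refine ⟨fun k => Nat.casesOn k π P, rfl, fun k hk => ?_, fun i hi => ?_⟩
      · cases k with
        | zero => simp at hk
        | succ k => exact hend k (Nat.le_of_succ_le_succ hk)
      · cases i with
        | zero =>
            refine Or.inr (Or.inr ⟨rfl, ?_⟩)
            show PlusCompat (P 0) π
            rw [h0]; exact hc
        | succ i => exact hstep i (Nat.lt_of_succ_lt_succ hi)

/-- Let `W ⊆ V(H n)` consist of exactly one vertex `(i, w i)` from each column.
If the associated sign sequence `σ^W` (with `s i = w (i+1) - w i` for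
`i ≤ n - 2` and `s (n-1) = -(w 0) - w (n-1)`) is good, then the replicated
graph `H n (W)` is 4-colourable. -/
theorem colorable_of_goodSeq (n : ℕ) (hn : 4 ≤ n) (w : Fin n → ZMod 3)
    (hgood : GoodSeq (List.ofFn (fun i : Fin n =>
      if h : (i : ℕ) + 1 < n then w ⟨(i : ℕ) + 1, h⟩ - w i
      else -(w ⟨0, by omega⟩) - w i))) :
    ((Hgraph n).replicateSet {v : Fin n × ZMod 3 | v.2 = w v.1}).Colorable 4 := by
  classical
  obtain ⟨P, hP0, hPend, hstep⟩ := stroll_exists hgood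
  set W' : ℕ → ZMod 3 := fun i => if h : i < n then w ⟨i, h⟩ else 0 with hW'
  have hW : ∀ i : Fin n, w i = W' (i : ℕ) := by
    intro i; simp [hW', i.isLt]
  have hstep2 : ∀ i : ℕ, i < n →
      StepRel (if i + 1 < n then W' (i + 1) - W' i else -(W' 0) - W' i)
        (P i) (P (i + 1)) := by
    intro i hi
    have h1 : i < (List.ofFn (fun i : Fin n =>
      if h : (i : ℕ) + 1 < n then w ⟨(i : ℕ) + 1, h⟩ - w i
      else -(w ⟨0, by omega⟩) - w i)).length := by simpa using hi
    have h2 := hstep i h1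
    simp only [List.get_eq_getElem, List.getElem_ofFn] at h2
    have he : (if h : i + 1 < n then w ⟨i + 1, h⟩ - w ⟨i, hi⟩
        else -(w ⟨0, by omega⟩) - w ⟨i, hi⟩)
        = if i + 1 < n then W' (i + 1) - W' i else -(W' 0) - W' i := by
      have h0n : 0 < n := by omega
      by_cases hc : i + 1 < n <;> simp [hW', hc, hi, h0n]
    rw [← he]
    convert h2 using 3
  have hPn : P n = goodEnd := hPend n (by simp)
  have hP0' : P 0 = basePattern := hP0
  have Fdisj : ∀ i : ℕ, i + 1 < n → ∀ j : ZMod 3,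
      Disjoint (slotS (P i) (j - W' i)) (slotS (P (i + 1)) (j - W' (i + 1))) := by
    intro i hi j
    have h2 := stepRel_disj (hstep2 i (by omega)) (j - W' i)
    rw [if_pos hi] at h2
    have e : j - W' i - (W' (i + 1) - W' i) = j - W' (i + 1) := by ring
    rwa [e] at h2
  have Ftwist : ∀ j : ZMod 3,
      Disjoint (slotS (P (n - 1)) (-j - W' (n - 1))) (slotS (P 0) (j - W' 0)) := by
    intro j
    have h2 := stepRel_disj (hstep2 (n - 1) (by omega)) (-j - W' (n - 1))
    rw [if_neg (by omega)] at h2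
    rw [show n - 1 + 1 = n by omega, hPn] at h2
    have e : -j - W' (n - 1) - (-(W' 0) - W' (n - 1)) = -(j - W' 0) := by ring
    rw [e, slot_goodEnd_neg, ← hP0'] at h2
    exact h2
  have hwadj : ∀ a b : Fin n × ZMod 3, (Hgraph n).Adj a b →
      (a.1 = b.1 ∧ a.2 ≠ b.2) ∨
        Disjoint (slotS (P (a.1 : ℕ)) (a.2 - W' (a.1 : ℕ)))
          (slotS (P (b.1 : ℕ)) (b.2 - W' (b.1 : ℕ))) := by
    intro a b hab
    rw [Hgraph, SimpleGraph.fromRel_adj] at hab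
    obtain ⟨hne, h | h⟩ := hab
    · rcases h with ⟨h1, h2⟩ | ⟨h1, h2⟩ | ⟨h1, h2, h3⟩
      · exact Or.inl ⟨h1, h2⟩
      · right
        have := Fdisj (a.1 : ℕ) (by rw [h1]; exact b.1.isLt) a.2
        rw [h1] at this
        rw [← h2]
        exact this
      · right
        have := (Ftwist a.2).symm
        rw [h1, h2, h3]
        exact this
    · rcases h with ⟨h1, h2⟩ | ⟨h1, h2⟩ | ⟨h1, h2, h3⟩
      · exact Or.inl ⟨h1.symm, fun e => h2 e.symm⟩
      · right
        have := (Fdisj (b.1 : ℕ) (by rw [h1]; exact a.1.isLt) b.2).symm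
        rw [h1] at this
        rw [← h2]
        exact this
      · right
        have := Ftwist b.2
        rw [h1, h2, h3]
        exact this
  refine ⟨SimpleGraph.Coloring.mk
    (Sum.elim (fun a => posC (P (a.1 : ℕ)) (a.2 - W' (a.1 : ℕ)))
      (fun v => bpick (P ((v : Fin n × ZMod 3).1 : ℕ)))) ?_⟩
  have memF : ∀ a : Fin n × ZMod 3,
      posC (P (a.1 : ℕ)) (a.2 - W' (a.1 : ℕ)) ∈
        slotS (P (a.1 : ℕ)) (a.2 - W' (a.1 : ℕ)) := fun a => posC_mem _ _
  have memB : ∀ a : Fin n × ZMod 3, a.2 = w a.1 →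
      bpick (P (a.1 : ℕ)) ∈ slotS (P (a.1 : ℕ)) (a.2 - W' (a.1 : ℕ)) := by
    intro a ha
    have : a.2 - W' (a.1 : ℕ) = 0 := by rw [ha, hW]; ring
    rw [this, slotS_zero]
    exact bpick_mem _
  rintro (a | ⟨a, ha⟩) (b | ⟨b, hb⟩) hadj
  · have hadj' : (Hgraph n).Adj a b := hadj
    rcases hwadj a b hadj' with ⟨h1, h2⟩ | hd
    · simp only [Sum.elim_inl]
      rw [h1]
      exact posC_inj _ (fun e => h2 (by rwa [sub_left_inj] at e))
    · simp only [Sum.elim_inl]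
      exact fun e => Finset.disjoint_left.mp hd (memF a) (e ▸ memF b)
  · have hb' : b.2 = w b.1 := hb
    have hadj' : (Hgraph n).Adj a b ∨ a = b := hadj
    simp only [Sum.elim_inl, Sum.elim_inr]
    rcases hadj' with hadj' | rfl
    · rcases hwadj a b hadj' with ⟨h1, h2⟩ | hd
      · rw [h1]; exact posC_ne_bpick _ _
      · exact fun e => Finset.disjoint_left.mp hd (memF a) (e ▸ memB b hb')
    · exact posC_ne_bpick _ _
  · have ha' : a.2 = w a.1 := ha
    have hadj' : (Hgraph n).Adj a b ∨ a = b := hadj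
    simp only [Sum.elim_inl, Sum.elim_inr]
    rcases hadj' with hadj' | rfl
    · rcases hwadj a b hadj' with ⟨h1, h2⟩ | hd
      · rw [h1]; exact (posC_ne_bpick _ _).symm
      · exact fun e => Finset.disjoint_left.mp hd (memB a ha') (e ▸ memF b)
    · exact (posC_ne_bpick _ _).symm
  · have ha' : a.2 = w a.1 := ha
    have hb' : b.2 = w b.1 := hb
    have hadj' : (Hgraph n).Adj a b := hadj
    simp only [Sum.elim_inr]
    rcases hwadj a b hadj' with ⟨h1, h2⟩ | hd
    · exact absurd (by rw [ha', hb', h1]) h2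
    · exact fun e => Finset.disjoint_left.mp hd (memB a ha') (e ▸ memB b hb')
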